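/- Let u be a harmonic function on the unit disk that extends continuously to the closed disk, and let v be a conjugate harmonic of u. Then it is not true in general that v extends continuously to the closed disk; i.e., there exists a harmonic u continuous on the closed unit disk whose conjugate harmonic function v fails to be bounded in every neighborhood of every point of the unit circle. -/

import Mathlib

open Complex MeasureTheory Filter Metric Set

noncomputable section

/-- `u` is harmonic on `D`: twice continuously differentiable with vanishing Laplacian. -/
def IsHarmonicOn (u : ℂ → ℝ) (D : Set ℂ) : Prop :=
  ContDiffOn ℝ 2 u D ∧
  ∀ z ∈ D, fderiv ℝ (fun w => fderiv ℝ u w 1) z 1 +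
    fderiv ℝ (fun w => fderiv ℝ u w Complex.I) z Complex.I = 0

/-- The open unit disk in `ℂ`. -/
def unitDisk : Set ℂ := Metric.ball 0 1

/-- A Stolz angle (nontangential approach region) at `ζ` with aperture `M`. -/
def stolzAngle (ζ : ℂ) (M : ℝ) : Set ℂ :=
  {z | ‖z‖ < 1 ∧ ‖z - ζ‖ < M * (1 - ‖z‖)}

/-- `f` has angular (nontangential) limit `L` at the boundary point `ζ` of the unit disk:
limit along every Stolz angle at `ζ`. -/
def HasAngularLimit {α : Type*} [TopologicalSpace α] (f : ℂ → α) (ζ : ℂ) (L : α) : Prop :=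
  ∀ M : ℝ, 1 < M → Filter.Tendsto f (nhdsWithin ζ (stolzAngle ζ M)) (nhds L)

/-- `v` is a conjugate harmonic function of `u` on `D`: `u + i v` is holomorphic on `D`. -/
def IsConjugatePair (u v : ℂ → ℝ) (D : Set ℂ) : Prop :=
  DifferentiableOn ℂ (fun z => (u z : ℂ) + v z * Complex.I) D

/-- The truncated Stolz sector with vertex at the boundary point `ζ` of the unit disk used in
the Privalov construction: `{z ∈ 𝔻 : |z| > 1/√2, |arg(ζ - z)| < π/4}` (the argument being
normalized relative to the direction `ζ`). -/
def privalovSector (ζ : ℂ) : Set ℂ :=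
  {z | ‖z‖ < 1 ∧ 1 / Real.sqrt 2 < ‖z‖ ∧
       |Complex.arg ((ζ - z) / ζ)| < Real.pi / 4}

/-- The Privalov domain over a set `E` of boundary points:
`𝔇 = (⋃ ζ ∈ E, S_ζ) ∪ {|z| ≤ 1/√2}`. -/
def privalovDomain (E : Set ℂ) : Set ℂ :=
  (⋃ ζ ∈ E, privalovSector ζ) ∪ Metric.closedBall 0 (1 / Real.sqrt 2)


namespace LusinExample

lemma log_two_lt_one : Real.log 2 < 1 :=
  lt_trans Real.log_two_lt_d9 (by norm_num)

lemma c0_pos : 0 < 1 - Real.log 2 := by linarith [log_two_lt_one]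

/-- The constant `c = -log(1 - log 2) ≥ 0`. -/
def cc : ℝ := -Real.log (1 - Real.log 2)

lemma cc_nonneg : 0 ≤ cc := by
  have h : Real.log (1 - Real.log 2) ≤ 0 :=
    Real.log_nonpos (by linarith [c0_pos])
      (by linarith [Real.log_nonneg (by norm_num : (1:ℝ) ≤ 2)])
  simp only [cc]; linarith

def Lc (w : ℂ) : ℂ := 1 - Complex.log (1 - w)

lemma Lc_re (w : ℂ) : (Lc w).re = 1 - Real.log (‖1 - w‖) := by
  simp [Lc, Complex.sub_re, Complex.log_re]

lemma log_abs_one_sub_le {w : ℂ} (hw : ‖1 - w‖ ≤ 2) :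
    Real.log (‖1 - w‖) ≤ Real.log 2 := by
  rcases eq_or_lt_of_le (norm_nonneg (1 - w)) with h | h
  · rw [← h, Real.log_zero]; exact Real.log_nonneg (by norm_num)
  · exact Real.log_le_log h hw

lemma Lc_re_ge {w : ℂ} (hw : ‖1 - w‖ ≤ 2) : 1 - Real.log 2 ≤ (Lc w).re := by
  rw [Lc_re]; linarith [log_abs_one_sub_le hw]

lemma Lc_re_pos {w : ℂ} (hw : ‖1 - w‖ ≤ 2) : 0 < (Lc w).re :=
  lt_of_lt_of_le c0_pos (Lc_re_ge hw)

lemma abs_one_sub_le {w : ℂ} (hw : ‖w‖ ≤ 1) : ‖1 - w‖ ≤ 2 := by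
  calc ‖1 - w‖ = ‖(1:ℂ) - w‖ := rfl
    _ ≤ ‖(1:ℂ)‖ + ‖w‖ := norm_sub_le _ _
    _ ≤ 2 := by rw [norm_one]; linarith

lemma Lc_slit {w : ℂ} (hw : ‖1 - w‖ ≤ 2) : Lc w ∈ Complex.slitPlane :=
  Complex.mem_slitPlane_iff.2 (Or.inl (Lc_re_pos hw))

lemma abs_Lc_ge {w : ℂ} (hw : ‖1 - w‖ ≤ 2) :
    1 - Real.log 2 ≤ ‖Lc w‖ :=
  le_trans (Lc_re_ge hw) (Complex.re_le_norm _)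

def Hc (w : ℂ) : ℂ := Complex.I * Complex.log (Lc w)

lemma Hc_re (w : ℂ) : (Hc w).re = - Complex.arg (Lc w) := by
  simp [Hc, Complex.mul_re, Complex.log_im]

lemma Hc_im (w : ℂ) : (Hc w).im = Real.log (‖Lc w‖) := by
  simp [Hc, Complex.mul_im, Complex.log_re]

lemma abs_Hc_re_le (w : ℂ) : |(Hc w).re| ≤ Real.pi := by
  rw [Hc_re, abs_neg]; exact Complex.abs_arg_le_pi _

lemma Hc_im_ge {w : ℂ} (hw : ‖1 - w‖ ≤ 2) : -cc ≤ (Hc w).im := by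
  rw [Hc_im, cc, neg_neg]
  exact Real.log_le_log c0_pos (abs_Lc_ge hw)

lemma norm_log_le (ξ : ℂ) : ‖Complex.log ξ‖ ≤ |Real.log (‖ξ‖)| + Real.pi := by
  refine (Complex.norm_le_abs_re_add_abs_im _).trans ?_
  rw [Complex.log_re, Complex.log_im]
  exact add_le_add le_rfl (Complex.abs_arg_le_pi _)

lemma abs_log_abs_le {w : ℂ} {r : ℝ} (hr : r < 1) (hw : ‖w‖ ≤ r) :
    |Real.log (‖1 - w‖)| ≤ Real.log (2 / (1 - r)) := by
  have h0 : (0:ℝ) ≤ r := (norm_nonneg w).trans hw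
  have h1r : 0 < 1 - r := by linarith
  have hlow : 1 - r ≤ ‖1 - w‖ := by
    have h2 := norm_sub_norm_le (1 : ℂ) w
    rw [norm_one] at h2
    linarith
  have hup : ‖1 - w‖ ≤ 2 := abs_one_sub_le (hw.trans hr.le)
  have hdiv : Real.log (2 / (1 - r)) = Real.log 2 - Real.log (1 - r) :=
    Real.log_div (by norm_num) (ne_of_gt h1r)
  rw [abs_le, hdiv]
  constructor
  · have := Real.log_le_log h1r hlow
    have hl2 : (0:ℝ) ≤ Real.log 2 := Real.log_nonneg one_le_two
    linarith
  · have := log_abs_one_sub_le hup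
    have hl1r : Real.log (1 - r) ≤ 0 := Real.log_nonpos h1r.le (by linarith)
    linarith

/-- Uniform bound for `‖Hc‖` on the disk of radius `r < 1`. -/
def Cb (r : ℝ) : ℝ := cc + Real.log (1 + Real.pi + Real.log (2 / (1 - r))) + Real.pi

lemma norm_Hc_le {w : ℂ} {r : ℝ} (hr : r < 1) (hw : ‖w‖ ≤ r) :
    ‖Hc w‖ ≤ Cb r := by
  have h0 : (0:ℝ) ≤ r := (norm_nonneg w).trans hw
  have hw2 : ‖1 - w‖ ≤ 2 := abs_one_sub_le (hw.trans hr.le)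
  have h1r : 0 < 1 - r := by linarith
  have hlogq : (0:ℝ) ≤ Real.log (2 / (1 - r)) := by
    apply Real.log_nonneg
    rw [le_div_iff₀ h1r]; linarith
  have hM1 : (1:ℝ) ≤ 1 + Real.pi + Real.log (2 / (1 - r)) := by
    have := Real.pi_nonneg; linarith
  have habsL : ‖Lc w‖ ≤ 1 + Real.pi + Real.log (2 / (1 - r)) := by
    have h1 : ‖Lc w‖ ≤ 1 + ‖Complex.log (1 - w)‖ := by
      have := norm_sub_le (1 : ℂ) (Complex.log (1 - w))
      simpa [Lc] using this
    have h2 : ‖Complex.log (1 - w)‖ ≤ |Real.log (‖1 - w‖)| + Real.pi := by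
      simpa using norm_log_le (1 - w)
    have h3 := abs_log_abs_le hr hw
    calc ‖Lc w‖ ≤ 1 + (|Real.log (‖1 - w‖)| + Real.pi) := by linarith
      _ ≤ 1 + Real.pi + Real.log (2 / (1 - r)) := by linarith
  have hlow := abs_Lc_ge hw2
  have habslog : |Real.log (‖Lc w‖)| ≤
      cc + Real.log (1 + Real.pi + Real.log (2 / (1 - r))) := by
    have hup : Real.log (‖Lc w‖) ≤
        Real.log (1 + Real.pi + Real.log (2 / (1 - r))) :=
      Real.log_le_log (lt_of_lt_of_le c0_pos hlow) habsL
    have hlo : -cc ≤ Real.log (‖Lc w‖) := by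
      rw [cc, neg_neg]; exact Real.log_le_log c0_pos hlow
    have hlogM : (0:ℝ) ≤ Real.log (1 + Real.pi + Real.log (2 / (1 - r))) :=
      Real.log_nonneg hM1
    rw [abs_le]
    constructor <;> [linarith [cc_nonneg]; linarith [cc_nonneg]]
  have : ‖Hc w‖ = ‖Complex.log (Lc w)‖ := by
    simp [Hc]
  rw [this, Cb]
  have := norm_log_le (Lc w)
  linarith

lemma one_sub_slit {w : ℂ} (hw : ‖w‖ < 1) : (1 - w) ∈ Complex.slitPlane := by
  apply Complex.mem_slitPlane_iff.2
  left
  have : w.re ≤ ‖w‖ := Complex.re_le_norm w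
  simp only [Complex.sub_re, Complex.one_re]
  linarith

lemma Hc_diffAt {w : ℂ} (hw : ‖w‖ < 1) : DifferentiableAt ℂ Hc w := by
  have h1 : DifferentiableAt ℂ (fun w : ℂ => 1 - w) w :=
    (differentiableAt_const _).sub differentiableAt_id
  have h2 : DifferentiableAt ℂ (fun w : ℂ => Complex.log (1 - w)) w :=
    h1.clog (one_sub_slit hw)
  have h3 : DifferentiableAt ℂ Lc w := by
    unfold Lc; exact (differentiableAt_const _).sub h2
  have h4 : DifferentiableAt ℂ (fun w => Complex.log (Lc w)) w :=
    h3.clog (Lc_slit (abs_one_sub_le hw.le))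
  unfold Hc
  exact h4.const_mul _

end LusinExample

namespace LusinExample

lemma isHarmonicOn_re {F : ℂ → ℂ} {D : Set ℂ} (hD : IsOpen D)
    (hF : DifferentiableOn ℂ F D) : IsHarmonicOn (fun z => (F z).re) D := by
  have hAn : AnalyticOnNhd ℂ F D := hF.analyticOnNhd hD
  have hd1 : ∀ w ∈ D, DifferentiableAt ℂ F w := fun w hw =>
    hF.differentiableAt (hD.mem_nhds hw)
  have hd2 : ∀ w ∈ D, DifferentiableAt ℂ (deriv F) w := fun w hw =>
    (hAn.deriv w hw).differentiableAt
  constructor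
  · have h2 : ContDiffOn ℂ 2 F D := hAn.contDiffOn hD.uniqueDiffOn
    exact Complex.reCLM.contDiff.comp_contDiffOn (h2.restrict_scalars ℝ)
  · intro z hz
    have key1 : ∀ w ∈ D, fderiv ℝ (fun z => (F z).re) w 1 = (deriv F w).re := by
      intro w hw
      have h := ((hd1 w hw).hasDerivAt.hasFDerivAt.restrictScalars ℝ)
      have h2 : HasFDerivAt (fun z => (F z).re) _ w := Complex.reCLM.hasFDerivAt.comp w h
      rw [h2.fderiv]
      simp
    have keyI : ∀ w ∈ D, fderiv ℝ (fun z => (F z).re) w Complex.I = -((deriv F w).im) := by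
      intro w hw
      have h := ((hd1 w hw).hasDerivAt.hasFDerivAt.restrictScalars ℝ)
      have h2 : HasFDerivAt (fun z => (F z).re) _ w := Complex.reCLM.hasFDerivAt.comp w h
      rw [h2.fderiv]
      simp [Complex.mul_re]
    have e1 : (fun w => fderiv ℝ (fun z => (F z).re) w 1) =ᶠ[nhds z]
        (fun w => (deriv F w).re) :=
      Filter.eventuallyEq_of_mem (hD.mem_nhds hz) key1
    have e2 : (fun w => fderiv ℝ (fun z => (F z).re) w Complex.I) =ᶠ[nhds z]
        (fun w => -((deriv F w).im)) :=
      Filter.eventuallyEq_of_mem (hD.mem_nhds hz) keyI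
    rw [e1.fderiv_eq, e2.fderiv_eq]
    have hF2 := (hd2 z hz).hasDerivAt.hasFDerivAt.restrictScalars ℝ
    have g1 : HasFDerivAt (fun w => (deriv F w).re) _ z := Complex.reCLM.hasFDerivAt.comp z hF2
    have g2 : HasFDerivAt (fun w => (deriv F w).im) _ z := Complex.imCLM.hasFDerivAt.comp z hF2
    have g2n : HasFDerivAt (fun w => -(deriv F w).im) _ z := g2.neg
    rw [g1.fderiv, g2n.fderiv]
    simp [Complex.mul_re, Complex.mul_im]

/-- enumeration of the rationals -/
def θk (k : ℕ) : ℝ := (((Denumerable.eqv ℚ).symm k : ℚ) : ℝ)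

def ek (k : ℕ) : ℂ := Complex.exp ((-θk k : ℝ) * Complex.I)

lemma abs_ek (k : ℕ) : ‖ek k‖ = 1 := Complex.norm_exp_ofReal_mul_I _

lemma exp_mul_ek (j : ℕ) : Complex.exp ((θk j : ℝ) * Complex.I) * ek j = 1 := by
  rw [ek, ← Complex.exp_add,
    show ((θk j : ℝ) : ℂ) * Complex.I + ((-θk j : ℝ) : ℂ) * Complex.I = 0 by push_cast; ring,
    Complex.exp_zero]

def ak (k : ℕ) : ℝ := (2:ℝ)⁻¹ ^ k

lemma ak_pos (k : ℕ) : 0 < ak k := by unfold ak; positivity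

lemma summable_ak : Summable ak := by
  apply summable_geometric_of_lt_one <;> norm_num

lemma tsum_ak : ∑' k, ak k = 2 := by
  unfold ak
  rw [tsum_geometric_of_lt_one (by norm_num) (by norm_num)]
  norm_num

def Fk (k : ℕ) (z : ℂ) : ℂ := (ak k : ℂ) * Hc (z * ek k)

def fC (z : ℂ) : ℂ := ∑' k, Fk k z

lemma abs_mul_ek (z : ℂ) (k : ℕ) : ‖z * ek k‖ = ‖z‖ := by
  rw [norm_mul, abs_ek, mul_one]

lemma norm_Fk_le {z : ℂ} {r : ℝ} (hr : r < 1) (hz : ‖z‖ ≤ r) (k : ℕ) :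
    ‖Fk k z‖ ≤ ak k * Cb r := by
  rw [Fk, norm_mul]
  have h1 : ‖((ak k : ℝ) : ℂ)‖ = ak k := by
    rw [Complex.norm_real, Real.norm_eq_abs, abs_of_pos (ak_pos k)]
  rw [h1]
  exact mul_le_mul_of_nonneg_left (norm_Hc_le hr (by rw [abs_mul_ek]; exact hz)) (ak_pos k).le

lemma summable_Fk {z : ℂ} (hz : ‖z‖ < 1) : Summable fun k => Fk k z :=
  Summable.of_norm_bounded (g := fun k => ak k * Cb (‖z‖))
    (summable_ak.mul_right _) (fun k => norm_Fk_le hz le_rfl k)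

lemma fC_diffOn : DifferentiableOn ℂ fC (Metric.ball (0:ℂ) 1) := by
  intro z hz
  rw [mem_ball_zero_iff] at hz
  set r : ℝ := (‖z‖ + 1) / 2 with hr_def
  have h0 : 0 ≤ ‖z‖ := norm_nonneg z
  have hzr : ‖z‖ < r := by rw [hr_def]; linarith
  have hr1 : r < 1 := by rw [hr_def]; linarith
  have hd : DifferentiableOn ℂ (fun w => ∑' k, Fk k w) (Metric.ball (0:ℂ) r) := by
    apply differentiableOn_tsum_of_summable_norm (summable_ak.mul_right (Cb r))
      _ Metric.isOpen_ball
    · intro k w hw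
      rw [mem_ball_zero_iff] at hw
      exact norm_Fk_le hr1 hw.le k
    · intro k
      intro w hw
      rw [mem_ball_zero_iff] at hw
      have hdiff : DifferentiableAt ℂ (fun w => Fk k w) w := by
        have hg : DifferentiableAt ℂ (fun w : ℂ => w * ek k) w :=
          differentiableAt_id.mul_const _
        have hH : DifferentiableAt ℂ Hc (w * ek k) := by
          apply Hc_diffAt
          rw [abs_mul_ek]; exact lt_trans hw hr1
        exact (hH.comp w hg).const_mul _
      exact hdiff.differentiableWithinAt
  have hz' : z ∈ Metric.ball (0:ℂ) r := by
    rw [mem_ball_zero_iff]; exact hzr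
  exact ((hd z hz').differentiableAt (Metric.isOpen_ball.mem_nhds hz')).differentiableWithinAt

def u (z : ℂ) : ℝ := (fC z).re
def v (z : ℂ) : ℝ := (fC z).im

end LusinExample

namespace LusinExample

lemma Hc_one_re : (Hc 1).re = 0 := by
  rw [Hc_re]
  have : Lc 1 = 1 := by
    unfold Lc; simp [Complex.log_zero]
  rw [this, Complex.arg_one, neg_zero]

lemma ReH_contOn : ContinuousOn (fun w => (Hc w).re) (Metric.closedBall (0:ℂ) 1) := by
  intro w hw
  rw [Metric.mem_closedBall, Complex.dist_eq, sub_zero] at hw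
  rcases eq_or_ne w 1 with rfl | hne
  · -- continuity at 1
    rw [← continuousWithinAt_diff_self]
    set s' : Set ℂ := Metric.closedBall (0:ℂ) 1 \ {1} with hs'
    have habs2 : ∀ x ∈ s', ‖1 - x‖ ≤ 2 := by
      intro x hx
      apply abs_one_sub_le
      have := hx.1
      rwa [Metric.mem_closedBall, Complex.dist_eq, sub_zero] at this
    -- the quotient im/abs tends to 0
    have hbound_tendsto : Tendsto (fun x : ℂ => Real.pi / (1 - Real.log (‖1 - x‖)))
        (nhdsWithin 1 s') (nhds 0) := by
      have h1 : Tendsto (fun x : ℂ => ‖1 - x‖) (nhdsWithin 1 s')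
          (nhdsWithin 0 (Set.Ioi 0)) := by
        rw [tendsto_nhdsWithin_iff]
        constructor
        · have hc : Continuous (fun x : ℂ => ‖1 - x‖) :=
            continuous_norm.comp (continuous_const.sub continuous_id)
          have := hc.tendsto 1
          simp only [sub_self, norm_zero] at this
          exact this.mono_left nhdsWithin_le_nhds
        · filter_upwards [self_mem_nhdsWithin] with x hx
          have : (1:ℂ) - x ≠ 0 := by
            intro h
            apply hx.2
            simp only [Set.mem_singleton_iff]
            have : x = 1 := by linear_combination -h
            exact this
          exact Set.mem_Ioi.2 (norm_pos_iff.2 this)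
      have h2 : Tendsto (fun x : ℂ => Real.log (‖1 - x‖)) (nhdsWithin 1 s') atBot :=
        Real.tendsto_log_nhdsGT_zero.comp h1
      have h3 : Tendsto (fun x : ℂ => 1 - Real.log (‖1 - x‖)) (nhdsWithin 1 s')
          atTop := tendsto_atTop_add_const_left _ 1 (tendsto_neg_atBot_atTop.comp h2)
      exact Tendsto.div_atTop tendsto_const_nhds h3
    have key : Tendsto (fun x : ℂ => (Lc x).im / ‖Lc x‖) (nhdsWithin 1 s')
        (nhds 0) := by
      apply squeeze_zero_norm' _ hbound_tendsto
      filter_upwards [self_mem_nhdsWithin] with x hx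
      have h2 := habs2 x hx
      have hden : 1 - Real.log (‖1 - x‖) ≤ ‖Lc x‖ := by
        have h := Complex.re_le_norm (Lc x)
        rw [Lc_re] at h
        exact h
      have hdenpos : 0 < 1 - Real.log (‖1 - x‖) := by
        have := log_abs_one_sub_le h2
        linarith [log_two_lt_one]
      have hnum : |(Lc x).im| ≤ Real.pi := by
        have : (Lc x).im = -Complex.arg (1 - x) := by
          simp [Lc, Complex.sub_im, Complex.log_im]
        rw [this, abs_neg]
        exact Complex.abs_arg_le_pi _
      rw [Real.norm_eq_abs, abs_div, _root_.abs_of_nonneg (norm_nonneg _)]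
      exact div_le_div₀ Real.pi_nonneg hnum hdenpos hden
    have harcsin : Tendsto (fun x : ℂ => Real.arcsin ((Lc x).im / ‖Lc x‖))
        (nhdsWithin 1 s') (nhds 0) := by
      have := (Real.continuous_arcsin.tendsto 0).comp key
      simpa [Real.arcsin_zero, Function.comp_def] using this
    have heq : ∀ x ∈ s', (Hc x).re = -Real.arcsin ((Lc x).im / ‖Lc x‖) := by
      intro x hx
      rw [Hc_re, Complex.arg_of_re_nonneg (Lc_re_pos (habs2 x hx)).le]
    have hng : Tendsto (fun x : ℂ => -Real.arcsin ((Lc x).im / ‖Lc x‖))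
        (nhdsWithin 1 s') (nhds 0) := by simpa using harcsin.neg
    rw [ContinuousWithinAt, Hc_one_re]
    apply Tendsto.congr' _ hng
    · filter_upwards [self_mem_nhdsWithin] with x hx
      exact (heq x hx).symm
  · -- continuity at w ≠ 1
    have h1 : (1 - w) ∈ Complex.slitPlane := by
      apply Complex.mem_slitPlane_iff.2
      by_cases him : w.im = 0
      · left
        have hre : w.re < 1 := by
          rcases lt_or_eq_of_le ((Complex.re_le_norm w).trans hw) with h | h
          · exact h
          · exfalso; apply hne
            have habs : ‖w‖ = 1 := le_antisymm hw (h ▸ Complex.re_le_norm w)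
            have : w = Complex.ofReal w.re := by
              apply Complex.ext <;> simp [him]
            rw [this] at habs ⊢
            rw [Complex.norm_real, Real.norm_eq_abs] at habs
            rw [abs_eq (by norm_num : (0:ℝ) ≤ 1)] at habs
            rcases habs with h' | h'
            · rw [h']; norm_num
            · exfalso; rw [this] at h; simp at h; linarith
        simp only [Complex.sub_re, Complex.one_re]; linarith
      · right
        simp only [Complex.sub_im, Complex.one_im, zero_sub, ne_eq, neg_eq_zero]
        exact him
    have c1 : ContinuousAt (fun x : ℂ => Complex.log (1 - x)) w :=
      (continuousAt_clog h1).comp ((continuous_const.sub continuous_id).continuousAt)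
    have c2 : ContinuousAt Lc w := by
      unfold Lc; exact continuousAt_const.sub c1
    have c3 : ContinuousAt (fun x => Complex.log (Lc x)) w :=
      (continuousAt_clog (Lc_slit (abs_one_sub_le hw))).comp c2
    exact ((Complex.continuous_re.continuousAt.comp (continuousAt_const.mul c3))).continuousWithinAt

def U0 (z : ℂ) : ℝ := ∑' k, ak k * (Hc (z * ek k)).re

lemma U0_contOn : ContinuousOn U0 (Metric.closedBall (0:ℂ) 1) := by
  apply continuousOn_tsum (u := fun k => ak k * Real.pi)
  · intro k
    apply ContinuousOn.mul continuousOn_const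
    apply ReH_contOn.comp (continuous_id.mul continuous_const).continuousOn
    intro z hz
    rw [Metric.mem_closedBall, Complex.dist_eq, sub_zero] at hz ⊢
    show ‖z * ek k‖ ≤ 1
    rw [abs_mul_ek]; exact hz
  · exact summable_ak.mul_right _
  · intro k z hz
    rw [Real.norm_eq_abs, abs_mul, abs_of_pos (ak_pos k)]
    exact mul_le_mul_of_nonneg_left (abs_Hc_re_le _) (ak_pos k).le

lemma U0_eq_u : Set.EqOn U0 u (Metric.ball (0:ℂ) 1) := by
  intro z hz
  rw [mem_ball_zero_iff] at hz
  have hs := summable_Fk hz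
  have h := Complex.reCLM.map_tsum hs
  rw [u, fC, U0]
  calc ∑' k, ak k * (Hc (z * ek k)).re = ∑' k, (Fk k z).re := by
        congr 1; funext k; simp [Fk, Complex.mul_re]
    _ = (∑' k, Fk k z).re := h.symm

end LusinExample

namespace LusinExample

lemma Hc_im_real {r : ℝ} (h0 : 0 ≤ r) (h1 : r < 1) :
    (Hc (r : ℂ)).im = Real.log (1 - Real.log (1 - r)) := by
  have h1r : (0:ℝ) ≤ 1 - r := by linarith
  have e3 : Lc (r:ℂ) = ((1 - Real.log (1 - r) : ℝ) : ℂ) := by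
    unfold Lc
    rw [show (1 : ℂ) - (r:ℂ) = ((1 - r : ℝ) : ℂ) by push_cast; ring,
      ← Complex.ofReal_log h1r]
    push_cast; ring
  rw [Hc_im, e3, Complex.norm_real, Real.norm_eq_abs, _root_.abs_of_nonneg]
  have : Real.log (1 - r) ≤ 0 := Real.log_nonpos h1r (by linarith)
  linarith

lemma summable_Fk_im {z : ℂ} (hz : ‖z‖ < 1) :
    Summable fun k => (Fk k z).im :=
  Complex.imCLM.summable (summable_Fk hz)

lemma v_eq_tsum {z : ℂ} (hz : ‖z‖ < 1) : v z = ∑' k, (Fk k z).im := by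
  rw [v, fC]
  exact Complex.imCLM.map_tsum (summable_Fk hz)

lemma Fk_im_ge {z : ℂ} (hz : ‖z‖ < 1) (k : ℕ) :
    -(cc * ak k) ≤ (Fk k z).im := by
  have h2 : ‖1 - z * ek k‖ ≤ 2 :=
    abs_one_sub_le (by rw [abs_mul_ek]; exact hz.le)
  have him : (Fk k z).im = ak k * (Hc (z * ek k)).im := by
    simp [Fk, Complex.mul_im]
  rw [him]
  calc -(cc * ak k) = ak k * (-cc) := by ring
    _ ≤ ak k * (Hc (z * ek k)).im :=
      mul_le_mul_of_nonneg_left (Hc_im_ge h2) (ak_pos k).le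

lemma v_lower {z : ℂ} (hz : ‖z‖ < 1) (j : ℕ) :
    ak j * (Hc (z * ek j)).im - 2 * cc ≤ v z := by
  classical
  have hs := summable_Fk_im hz
  rw [v_eq_tsum hz, hs.tsum_eq_add_tsum_ite j]
  have hlhs : Summable (fun k => -(cc * ak k)) := (summable_ak.mul_left cc).neg
  have hrhs : Summable (fun k => if k = j then 0 else (Fk k z).im) := by
    have h := hs.update j 0
    apply h.congr
    intro k
    simp [Function.update_apply]
  have hle : ∀ k, -(cc * ak k) ≤ (if k = j then 0 else (Fk k z).im) := by
    intro k
    rcases eq_or_ne k j with h | h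
    · rw [if_pos h]
      have := mul_nonneg cc_nonneg (ak_pos k).le
      linarith
    · rw [if_neg h]
      exact Fk_im_ge hz k
  have hge := hlhs.tsum_le_tsum hle hrhs
  have hsum : ∑' k, -(cc * ak k) = -(2 * cc) := by
    rw [tsum_neg, tsum_mul_left, tsum_ak]; ring
  have him : (Fk j z).im = ak j * (Hc (z * ek j)).im := by
    simp [Fk, Complex.mul_im]
  rw [him]
  have hrest : -(2*cc) ≤ ∑' k, (if k = j then 0 else (Fk k z).im) := hsum ▸ hge
  linarith

lemma exists_big {ζ : ℂ} (hζ : ‖ζ‖ = 1) {ε : ℝ} (hε : 0 < ε) (C : ℝ) :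
    ∃ z, z ∈ Metric.ball ζ ε ∩ Metric.ball (0:ℂ) 1 ∧ C < v z := by
  classical
  set m : ℝ := min (ε/8) 1 with hm_def
  have hmpos : 0 < m := lt_min (by linarith) one_pos
  have hm1 : m ≤ 1 := min_le_right _ _
  have hmε : m ≤ ε/8 := min_le_left _ _
  obtain ⟨q, hq1, hq2⟩ := exists_rat_btwn (show ζ.arg - m < ζ.arg by linarith)
  set j : ℕ := (Denumerable.eqv ℚ) q with hj
  have hθj : θk j = (q:ℝ) := by
    rw [θk, hj, Equiv.symm_apply_apply]
  have hqa : |(q:ℝ) - ζ.arg| ≤ m := by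
    rw [abs_le]; constructor <;> linarith
  have hζeq : Complex.exp (ζ.arg * Complex.I) = ζ := by
    have h := Complex.norm_mul_exp_arg_mul_I ζ
    rwa [hζ, Complex.ofReal_one, one_mul] at h
  have hclose : ‖Complex.exp ((θk j : ℝ) * Complex.I) - ζ‖ ≤ 2 * m := by
    rw [hθj, ← hζeq]
    have hfac : Complex.exp ((q:ℝ) * Complex.I) - Complex.exp (ζ.arg * Complex.I)
        = Complex.exp (ζ.arg * Complex.I) *
          (Complex.exp ((((q:ℝ) - ζ.arg : ℝ)) * Complex.I) - 1) := by
      rw [mul_sub, mul_one, ← Complex.exp_add]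
      push_cast; ring_nf
    rw [hfac, norm_mul, Complex.norm_exp_ofReal_mul_I, one_mul]
    have hx : ‖(((q:ℝ) - ζ.arg : ℝ) : ℂ) * Complex.I‖ ≤ 1 := by
      rw [norm_mul, Complex.norm_I, mul_one, Complex.norm_real, Real.norm_eq_abs]
      exact hqa.trans hm1
    have h2 := Complex.norm_exp_sub_one_le hx
    rw [norm_mul, Complex.norm_I, mul_one, Complex.norm_real, Real.norm_eq_abs] at h2
    calc ‖Complex.exp ((((q:ℝ) - ζ.arg : ℝ)) * Complex.I) - 1‖
        ≤ 2 * |(q:ℝ) - ζ.arg| := h2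
      _ ≤ 2 * m := by linarith
  set T : ℝ := (2:ℝ)^j * (C + 2*cc + 1) with hT
  set δ : ℝ := min (Real.exp (1 - Real.exp T)) (min (ε/2) 1) with hδ_def
  have hδpos : 0 < δ := lt_min (Real.exp_pos _) (lt_min (by linarith) one_pos)
  have hδ1 : δ ≤ 1 := le_trans (min_le_right _ _) (min_le_right _ _)
  have hδε : δ ≤ ε/2 := le_trans (min_le_right _ _) (min_le_left _ _)
  have hδT : δ ≤ Real.exp (1 - Real.exp T) := min_le_left _ _
  set r : ℝ := 1 - δ with hr_def
  have hr0 : 0 ≤ r := by rw [hr_def]; linarith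
  have hr1 : r < 1 := by rw [hr_def]; linarith
  set z : ℂ := (r : ℂ) * Complex.exp ((θk j : ℝ) * Complex.I) with hz_def
  have habsz : ‖z‖ = r := by
    rw [hz_def, norm_mul, Complex.norm_real, Real.norm_eq_abs, Complex.norm_exp_ofReal_mul_I, mul_one,
      _root_.abs_of_nonneg hr0]
  have hz1 : ‖z‖ < 1 := by rw [habsz]; exact hr1
  have hzej : z * ek j = (r : ℂ) := by
    rw [hz_def, mul_assoc, exp_mul_ek, mul_one]
  have hmem : z ∈ Metric.ball ζ ε := by
    rw [Metric.mem_ball, Complex.dist_eq]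
    have h1 : ‖z - Complex.exp ((θk j:ℝ) * Complex.I)‖ = 1 - r := by
      rw [hz_def, show (r:ℂ) * Complex.exp ((θk j:ℝ) * Complex.I)
          - Complex.exp ((θk j:ℝ) * Complex.I)
          = ((r - 1 : ℝ) : ℂ) * Complex.exp ((θk j:ℝ) * Complex.I) by push_cast; ring,
        norm_mul, Complex.norm_real, Real.norm_eq_abs, Complex.norm_exp_ofReal_mul_I, mul_one,
        abs_of_nonpos (by linarith : r - 1 ≤ 0)]
      ring
    have htri : ‖z - ζ‖ ≤ ‖z - Complex.exp ((θk j:ℝ) * Complex.I)‖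
        + ‖Complex.exp ((θk j:ℝ) * Complex.I) - ζ‖ :=
      norm_sub_le_norm_sub_add_norm_sub z (Complex.exp ((θk j:ℝ) * Complex.I)) ζ
    rw [h1] at htri
    have hrδ : 1 - r = δ := by rw [hr_def]; ring
    calc ‖z - ζ‖ ≤ (1 - r) + 2*m := by linarith [hclose]
      _ < ε := by rw [hrδ]; linarith [hδε, hmε]
  have hvlow := v_lower hz1 j
  have hHim : (Hc (z * ek j)).im = Real.log (1 - Real.log (1 - r)) := by
    rw [hzej]; exact Hc_im_real hr0 hr1
  have hbig : T ≤ Real.log (1 - Real.log (1 - r)) := by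
    have h1δ : Real.log δ ≤ 1 - Real.exp T :=
      (Real.log_le_log hδpos hδT).trans_eq (Real.log_exp _)
    have h2 : Real.exp T ≤ 1 - Real.log δ := by linarith
    have h0 : 1 - r = δ := by rw [hr_def]; ring
    rw [h0]
    calc T = Real.log (Real.exp T) := (Real.log_exp T).symm
      _ ≤ Real.log (1 - Real.log δ) := Real.log_le_log (Real.exp_pos T) h2
  have hak : ak j * T = C + 2*cc + 1 := by
    rw [hT]
    unfold ak
    rw [← mul_assoc, ← mul_pow]
    norm_num
  have hfin : C < v z := by
    have h3 : ak j * T ≤ ak j * (Hc (z * ek j)).im := by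
      rw [hHim]
      exact mul_le_mul_of_nonneg_left hbig (ak_pos j).le
    rw [hak] at h3
    linarith
  exact ⟨z, ⟨hmem, by rw [mem_ball_zero_iff]; exact hz1⟩, hfin⟩

end LusinExample

/-- Lusin's example: there is a harmonic function `u` on the unit disk extending continuously
to the closed disk whose conjugate harmonic function `v` is unbounded in every neighborhood
of every point of the unit circle. -/
theorem exists_continuous_u_with_wild_conjugate :
    ∃ u v : ℂ → ℝ, IsHarmonicOn u unitDisk ∧ IsConjugatePair u v unitDisk ∧
      (∃ U : ℂ → ℝ, ContinuousOn U (Metric.closedBall 0 1) ∧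
        Set.EqOn U u (Metric.ball 0 1)) ∧
      ∀ ζ ∈ Metric.sphere (0 : ℂ) 1, ∀ ε : ℝ, 0 < ε →
        ¬ ∃ C : ℝ, ∀ z ∈ Metric.ball ζ ε ∩ unitDisk, |v z| ≤ C := by
  classical
  refine ⟨LusinExample.u, LusinExample.v, ?_, ?_,
    ⟨LusinExample.U0, LusinExample.U0_contOn, LusinExample.U0_eq_u⟩, ?_⟩
  · exact LusinExample.isHarmonicOn_re Metric.isOpen_ball LusinExample.fC_diffOn
  · unfold IsConjugatePair unitDisk
    have h : (fun z => ((LusinExample.u z : ℂ) + (LusinExample.v z : ℂ) * Complex.I))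
        = LusinExample.fC :=
      funext fun z => Complex.re_add_im (LusinExample.fC z)
    rw [h]
    exact LusinExample.fC_diffOn
  · rintro ζ hζ ε hε ⟨C, hC⟩
    have hζ1 : ‖ζ‖ = 1 := by
      rw [mem_sphere_iff_norm, sub_zero] at hζ
      exact hζ
    obtain ⟨z, hzmem, hzv⟩ := LusinExample.exists_big hζ1 hε C
    have h1 := hC z hzmem
    have h2 : LusinExample.v z ≤ |LusinExample.v z| := le_abs_self _
    linarith
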